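/- For A, B ∈ SL(2,ℝ) both hyperbolic whose axes in ℍ intersect in exactly one point, the product AB is hyperbolic, and cosh(τ(AB)/2) = cosh(τ(A)/2)cosh(τ(B)/2) + sinh(τ(A)/2)sinh(τ(B)/2)cos θ, where θ is the angle between the oriented axes and τ denotes translation length. -/

import Mathlib

open Real

/-- Inverse hyperbolic cosine. -/
noncomputable def arcosh (x : ℝ) : ℝ := Real.log (x + Real.sqrt (x ^ 2 - 1))

/-- The translation length of a hyperbolic element of `SL(2,ℝ)`. -/
noncomputable def transLength (M : Matrix.SpecialLinearGroup (Fin 2) ℝ) : ℝ :=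
  2 * _root_.arcosh (|Matrix.trace (M : Matrix (Fin 2) (Fin 2) ℝ)| / 2)

/-- The hyperbolic translation of length `t` along the imaginary axis, as an element of
`SL(2,ℝ)`. -/
noncomputable def hypTrans (t : ℝ) : Matrix.SpecialLinearGroup (Fin 2) ℝ :=
  ⟨!![Real.exp (t / 2), 0; 0, Real.exp (-(t / 2))], by
    simp [Matrix.det_fin_two_of, ← Real.exp_add]⟩

/-- The rotation by angle `θ` about the point `i`, as an element of `SL(2,ℝ)`; conjugating
`hypTrans` by it produces a hyperbolic element whose axis passes through `i` at angle `θ`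
to the imaginary axis. -/
noncomputable def rotAt (θ : ℝ) : Matrix.SpecialLinearGroup (Fin 2) ℝ :=
  ⟨!![Real.cos (θ / 2), Real.sin (θ / 2); -Real.sin (θ / 2), Real.cos (θ / 2)], by
    simp [Matrix.det_fin_two_of]; nlinarith [Real.sin_sq_add_cos_sq (θ / 2)]⟩

lemma cosh_arcosh' {x : ℝ} (hx : 1 ≤ x) : Real.cosh (_root_.arcosh x) = x := by
  have h1 : 0 ≤ x ^ 2 - 1 := by nlinarith
  have hs : Real.sqrt (x ^ 2 - 1) ^ 2 = x ^ 2 - 1 := Real.sq_sqrt h1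
  have hs0 : 0 ≤ Real.sqrt (x ^ 2 - 1) := Real.sqrt_nonneg _
  have hu : 0 < x + Real.sqrt (x ^ 2 - 1) := by nlinarith
  rw [Real.cosh_eq, _root_.arcosh, Real.exp_log hu, ← Real.log_inv, Real.exp_log (by positivity)]
  have : (x + Real.sqrt (x ^ 2 - 1))⁻¹ = x - Real.sqrt (x ^ 2 - 1) := by
    rw [inv_eq_iff_eq_inv, eq_comm, inv_eq_iff_eq_inv] at *
    field_simp
    nlinarith
  rw [this]; ring

lemma arcosh_cosh' {x : ℝ} (hx : 0 ≤ x) : _root_.arcosh (Real.cosh x) = x := by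
  have h : Real.cosh x ^ 2 - 1 = Real.sinh x ^ 2 := by
    have := Real.cosh_sq_sub_sinh_sq x; nlinarith
  rw [_root_.arcosh, h, Real.sqrt_sq (by positivity), Real.cosh_add_sinh, Real.log_exp]

lemma trace_hypTrans (t : ℝ) :
    Matrix.trace ((hypTrans t : Matrix.SpecialLinearGroup (Fin 2) ℝ) : Matrix (Fin 2) (Fin 2) ℝ)
      = 2 * Real.cosh (t / 2) := by
  simp [hypTrans, Matrix.trace_fin_two, Real.cosh_eq]
  ring

lemma transLength_of_trace {M : Matrix.SpecialLinearGroup (Fin 2) ℝ} {t : ℝ} (ht : 0 ≤ t)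
    (h : Matrix.trace ((M : Matrix.SpecialLinearGroup (Fin 2) ℝ) : Matrix (Fin 2) (Fin 2) ℝ)
        = 2 * Real.cosh (t / 2)) :
    transLength M = t := by
  rw [transLength, h, abs_of_pos (by positivity)]
  rw [show 2 * Real.cosh (t / 2) / 2 = Real.cosh (t / 2) by ring,
    arcosh_cosh' (by positivity)]
  ring

lemma trace_key (a b θ : ℝ) :
    Matrix.trace ((hypTrans a * (rotAt θ * hypTrans b * (rotAt θ)⁻¹) :
        Matrix.SpecialLinearGroup (Fin 2) ℝ) : Matrix (Fin 2) (Fin 2) ℝ)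
    = 2 * (Real.cosh (a/2) * Real.cosh (b/2)
        + Real.sinh (a/2) * Real.sinh (b/2) * Real.cos θ) := by
  have hcs := Real.sin_sq_add_cos_sq (θ/2)
  have hcos : Real.cos θ = 2 * Real.cos (θ/2)^2 - 1 := by
    have := Real.cos_two_mul (θ/2); rwa [show 2*(θ/2) = θ by ring] at this
  have hea : Real.exp (-(a/2)) = (Real.exp (a/2))⁻¹ := Real.exp_neg _
  have heb : Real.exp (-(b/2)) = (Real.exp (b/2))⁻¹ := Real.exp_neg _
  have hpa : Real.exp (a/2) ≠ 0 := Real.exp_ne_zero _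
  have hpb : Real.exp (b/2) ≠ 0 := Real.exp_ne_zero _
  simp only [Matrix.SpecialLinearGroup.coe_mul, Matrix.SpecialLinearGroup.coe_inv]
  simp only [
    hypTrans, rotAt, Matrix.adjugate_fin_two_of, Matrix.trace_fin_two,
    Matrix.mul_apply, Fin.sum_univ_two, Matrix.cons_val', Matrix.cons_val_zero,
    Matrix.cons_val_one, Matrix.head_cons, Matrix.head_fin_const, Matrix.empty_val',
    Matrix.cons_val_fin_one, Matrix.of_apply, Real.cosh_eq, Real.sinh_eq]
  rw [hcos, hea, heb]
  field_simp
  ring_nf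
  simp only [show Real.sin (θ*(1/2))^2 = 1 - Real.cos (θ*(1/2))^2 from by
    nlinarith [Real.sin_sq_add_cos_sq (θ*(1/2))]]
  ring

/-- If `A`, `B` are hyperbolic elements of `SL(2,ℝ)` whose axes cross in a single point at
angle `θ` (after conjugation: `A` translates by `a` along the imaginary axis and `B` is its
length-`b` analogue rotated by `θ` about `i`), then `A*B` is hyperbolic and
`cosh (τ(AB)/2) = cosh (τ(A)/2) cosh (τ(B)/2) + sinh (τ(A)/2) sinh (τ(B)/2) cos θ`. -/
theorem trace_product_intersecting_axes (a b θ : ℝ) (ha : 0 < a) (hb : 0 < b)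
    (hθ₀ : 0 < θ) (hθπ : θ < π)
    (A B : Matrix.SpecialLinearGroup (Fin 2) ℝ)
    (hA : A = hypTrans a) (hB : B = rotAt θ * hypTrans b * (rotAt θ)⁻¹) :
    transLength A = a ∧ transLength B = b ∧
    2 < |Matrix.trace ((A * B : Matrix.SpecialLinearGroup (Fin 2) ℝ) : Matrix (Fin 2) (Fin 2) ℝ)| ∧
    Real.cosh (transLength (A * B) / 2)
      = Real.cosh (a / 2) * Real.cosh (b / 2)
        + Real.sinh (a / 2) * Real.sinh (b / 2) * Real.cos θ := by
  subst hA hB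
  -- trace of B equals trace of hypTrans b (conjugation invariance)
  have htrB : Matrix.trace ((rotAt θ * hypTrans b * (rotAt θ)⁻¹ :
      Matrix.SpecialLinearGroup (Fin 2) ℝ) : Matrix (Fin 2) (Fin 2) ℝ)
      = 2 * Real.cosh (b / 2) := by
    rw [Matrix.SpecialLinearGroup.coe_mul, Matrix.trace_mul_comm,
      ← Matrix.SpecialLinearGroup.coe_mul, ← mul_assoc, inv_mul_cancel, one_mul,
      trace_hypTrans]
  -- T > 1
  have hcosθ : -1 < Real.cos θ := by
    have h1 : 0 < Real.cos (θ/2) := Real.cos_pos_of_mem_Ioo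
      ⟨by linarith [Real.pi_pos], by linarith⟩
    have h2 := Real.cos_two_mul (θ/2)
    rw [show 2*(θ/2) = θ by ring] at h2
    nlinarith
  have hsa : 0 < Real.sinh (a/2) := Real.sinh_pos_iff.2 (by linarith)
  have hsb : 0 < Real.sinh (b/2) := Real.sinh_pos_iff.2 (by linarith)
  have hT1 : 1 < Real.cosh (a/2) * Real.cosh (b/2)
      + Real.sinh (a/2) * Real.sinh (b/2) * Real.cos θ := by
    have h3 := Real.cosh_sub (a/2) (b/2)
    have h4 := Real.one_le_cosh (a/2 - b/2)
    nlinarith [mul_pos (mul_pos hsa hsb) (show (0:ℝ) < Real.cos θ + 1 by linarith)]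
  have htrAB := trace_key a b θ
  refine ⟨transLength_of_trace ha.le (trace_hypTrans a), transLength_of_trace hb.le htrB,
    ?_, ?_⟩
  · rw [htrAB, abs_of_pos (by linarith)]; linarith
  · rw [transLength, htrAB, abs_of_pos (by linarith), mul_div_cancel_left₀ _ two_ne_zero,
      mul_div_cancel_left₀ _ two_ne_zero, cosh_arcosh' hT1.le]
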